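/- Let u be a vector supported on a finite set J_0 whose nonzero coordinates are comparable: |u(i)| <= 2|u(j)| for all i, j in J_0. If Lambda is a subset of J_0 with |Lambda| > |J_0|/2, then ||u|_Lambda||_2 > ||u|_{J_0}||_2 / sqrt(5). -/
import Mathlib


open scoped BigOperators

noncomputable def l2 {d : ℕ} (v : Fin d → ℝ) : ℝ := Real.sqrt (∑ i, (v i)^2)

noncomputable def l1 {d : ℕ} (v : Fin d → ℝ) : ℝ := ∑ i, |v i|

noncomputable def linf {d : ℕ} (v : Fin d → ℝ) : ℝ := ⨆ i, |v i|

noncomputable def restrict {d : ℕ} (v : Fin d → ℝ) (T : Finset (Fin d)) : Fin d → ℝ :=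
  fun i => if i ∈ T then v i else 0

open Classical in
noncomputable def spt {d : ℕ} (v : Fin d → ℝ) : Finset (Fin d) :=
  Finset.univ.filter (fun i => v i ≠ 0)

def RIC {N d : ℕ} (Φ : Matrix (Fin N) (Fin d) ℝ) (m : ℕ) (ε : ℝ) : Prop :=
  ∀ z : Fin d → ℝ, (spt z).card ≤ m →
    (1 - ε) * l2 z ≤ l2 (Φ.mulVec z) ∧ l2 (Φ.mulVec z) ≤ (1 + ε) * l2 z

lemma l2_restrict {d : ℕ} (v : Fin d → ℝ) (T : Finset (Fin d)) :
    l2 (restrict v T) = Real.sqrt (∑ i ∈ T, (v i)^2) := by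
  unfold l2 restrict
  congr 1
  rw [← Finset.sum_subset (Finset.subset_univ T)]
  · exact Finset.sum_congr rfl (fun i hi => by simp [hi])
  · intro i _ hi; simp [hi]

/-- A majority subset of comparable nonzero coordinates captures more than a
1/√5 fraction of the energy. -/
theorem stmt9 {d : ℕ} (u : Fin d → ℝ) (J₀ : Finset (Fin d))
    (hsupp : ∀ i ∉ J₀, u i = 0)
    (hnonzero : ∀ i ∈ J₀, u i ≠ 0)
    (hcomp : ∀ i ∈ J₀, ∀ j ∈ J₀, |u i| ≤ 2 * |u j|)
    (Λ : Finset (Fin d)) (hΛ : Λ ⊆ J₀) (hbig : J₀.card < 2 * Λ.card) :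
    l2 (restrict u Λ) > l2 (restrict u J₀) / Real.sqrt 5 := by
  have hΛne : Λ.Nonempty := by
    rcases Λ.eq_empty_or_nonempty with h | h
    · simp [h] at hbig
    · exact h
  obtain ⟨j₀, hj₀Λ, hj₀min⟩ := Λ.exists_min_image (fun i => (u i)^2) hΛne
  set c : ℝ := (u j₀)^2 with hc
  have hcpos : 0 < c := by
    have := hnonzero j₀ (hΛ hj₀Λ)
    positivity
  have hlow : (Λ.card : ℝ) * c ≤ ∑ i ∈ Λ, (u i)^2 := by
    calc (Λ.card : ℝ) * c = ∑ _i ∈ Λ, c := by simp [mul_comm]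
      _ ≤ _ := Finset.sum_le_sum (fun i hi => hj₀min i hi)
  have hhigh : ∑ i ∈ J₀ \ Λ, (u i)^2 ≤ ((J₀ \ Λ).card : ℝ) * (4 * c) := by
    calc ∑ i ∈ J₀ \ Λ, (u i)^2 ≤ ∑ _i ∈ J₀ \ Λ, 4 * c := by
          apply Finset.sum_le_sum
          intro i hi
          have hiJ : i ∈ J₀ := (Finset.mem_sdiff.mp hi).1
          have h1 : |u i| ≤ 2 * |u j₀| := hcomp i hiJ j₀ (hΛ hj₀Λ)
          have h2 : (u i)^2 ≤ (2 * |u j₀|)^2 := by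
            rw [← sq_abs (u i)]
            exact pow_le_pow_left₀ (abs_nonneg _) h1 2
          calc (u i)^2 ≤ (2 * |u j₀|)^2 := h2
            _ = 4 * c := by rw [mul_pow, sq_abs]; norm_num [hc]
      _ = ((J₀ \ Λ).card : ℝ) * (4 * c) := by simp [mul_comm]
  have hsplit : ∑ i ∈ J₀, (u i)^2 = ∑ i ∈ Λ, (u i)^2 + ∑ i ∈ J₀ \ Λ, (u i)^2 := by
    rw [← Finset.sum_sdiff hΛ]; ring
  have hcard : ((J₀ \ Λ).card : ℝ) < (Λ.card : ℝ) := by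
    have : (J₀ \ Λ).card = J₀.card - Λ.card := Finset.card_sdiff_of_subset hΛ
    have hle := Finset.card_le_card hΛ
    push_cast
    rw [this]
    push_cast [Nat.cast_sub hle]
    have : (J₀.card : ℝ) < 2 * Λ.card := by exact_mod_cast hbig
    linarith
  have key : ∑ i ∈ J₀, (u i)^2 < 5 * ∑ i ∈ Λ, (u i)^2 := by
    rw [hsplit]
    have : ((J₀ \ Λ).card : ℝ) * (4 * c) < (Λ.card : ℝ) * (4 * c) := by
      apply mul_lt_mul_of_pos_right hcard; linarith
    nlinarith
  rw [l2_restrict, l2_restrict,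
    show Real.sqrt (∑ i ∈ J₀, (u i)^2) / Real.sqrt 5
        = Real.sqrt ((∑ i ∈ J₀, (u i)^2) / 5) from (Real.sqrt_div (by positivity) 5).symm]
  apply Real.sqrt_lt_sqrt (by positivity)
  linarith
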